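/- If a sequence (δ_τ) of reals in [0,1) satisfies δ_{τ+1} ≤ γ²δ_τ / (1 - δ_τ + γ²δ_τ) for all τ ≥ 0, where 0 < γ < 1, then for all τ ≥ 0, δ_{τ+1} ≤ γ^{2τ+2} δ_0 / (1 - (1 - γ^{2τ+2}) δ_0). -/

import Mathlib

lemma stmt0_mono (a x y : ℝ) (ha : 0 < a) (hx : 0 ≤ x) (hxy : x ≤ y) (hy : y < 1) :
    a * x / (1 - x + a * x) ≤ a * y / (1 - y + a * y) := by
  have hdx : 0 < 1 - x + a * x := by nlinarith
  have hdy : 0 < 1 - y + a * y := by nlinarith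
  rw [div_le_div_iff₀ hdx hdy]
  nlinarith

lemma stmt0_key (a b d : ℝ) (h1 : 1 - (1 - b) * d ≠ 0)
    (h2 : 1 - b * d / (1 - (1 - b) * d) + a * (b * d / (1 - (1 - b) * d)) ≠ 0)
    (h3 : 1 - (1 - a * b) * d ≠ 0) :
    a * (b * d / (1 - (1 - b) * d)) / (1 - b * d / (1 - (1 - b) * d) + a * (b * d / (1 - (1 - b) * d)))
      = a * b * d / (1 - (1 - a * b) * d) := by
  rw [div_eq_div_iff h2 h3]
  have h1' : 1 - d * (1 - b) ≠ 0 := by contrapose! h1; linarith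
  field_simp
  ring

theorem stmt_0 (δ : ℕ → ℝ) (γ : ℝ) (hγ0 : 0 < γ) (hγ1 : γ < 1)
    (hδ : ∀ τ, 0 ≤ δ τ ∧ δ τ < 1)
    (hrec : ∀ τ, δ (τ + 1) ≤ γ ^ 2 * δ τ / (1 - δ τ + γ ^ 2 * δ τ)) :
    ∀ τ, δ (τ + 1) ≤ γ ^ (2 * τ + 2) * δ 0 / (1 - (1 - γ ^ (2 * τ + 2)) * δ 0) := by
  obtain ⟨hδ0, hδ1⟩ := hδ 0
  intro τ
  induction τ with
  | zero =>
    have h := hrec 0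
    have heq : γ ^ (2 * 0 + 2) * δ 0 / (1 - (1 - γ ^ (2 * 0 + 2)) * δ 0)
        = γ ^ 2 * δ 0 / (1 - δ 0 + γ ^ 2 * δ 0) := by norm_num; ring_nf
    rw [heq]; exact h
  | succ τ ih =>
    set b := γ ^ (2 * τ + 2) with hb
    have hbpos : 0 < b := pow_pos hγ0 _
    have hble : b ≤ 1 := pow_le_one₀ hγ0.le hγ1.le
    have hapos : 0 < γ ^ 2 := pow_pos hγ0 _
    have hale : γ ^ 2 ≤ 1 := pow_le_one₀ hγ0.le hγ1.le
    have hD : 0 < 1 - (1 - b) * δ 0 := by nlinarith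
    set g := b * δ 0 / (1 - (1 - b) * δ 0) with hg
    have hg0 : 0 ≤ g := div_nonneg (by positivity) hD.le
    have hg1 : g < 1 := by
      rw [hg, div_lt_one hD]; nlinarith
    obtain ⟨h1, _⟩ := hδ (τ + 1)
    have step := hrec (τ + 1)
    have mono := stmt0_mono (γ ^ 2) (δ (τ + 1)) g hapos h1 ih hg1
    have key : γ ^ 2 * g / (1 - g + γ ^ 2 * g)
        = γ ^ (2 * (τ + 1) + 2) * δ 0 / (1 - (1 - γ ^ (2 * (τ + 1) + 2)) * δ 0) := by
      have hD2 : 0 < 1 - (1 - γ ^ (2 * (τ + 1) + 2)) * δ 0 := by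
        have : 0 < γ ^ (2 * (τ + 1) + 2) := pow_pos hγ0 _
        have : γ ^ (2 * (τ + 1) + 2) ≤ 1 := pow_le_one₀ hγ0.le hγ1.le
        nlinarith
      have hd3 : 0 < 1 - g + γ ^ 2 * g := by nlinarith
      have hpow : γ ^ (2 * (τ + 1) + 2) = γ ^ 2 * b := by
        rw [hb, ← pow_add]; ring_nf
      rw [hpow] at hD2
      rw [hpow, hg]
      rw [hg] at hd3
      exact stmt0_key _ _ _ hD.ne' hd3.ne' hD2.ne'
    calc δ (τ + 1 + 1) ≤ γ ^ 2 * δ (τ + 1) / (1 - δ (τ + 1) + γ ^ 2 * δ (τ + 1)) := step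
      _ ≤ γ ^ 2 * g / (1 - g + γ ^ 2 * g) := mono
      _ = _ := key
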